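/- Let τ < T be real numbers, let v, w ∈ ℕ with v + 1 < w, and set u = w − v − 1. Let h : ℝ^u × ℝ^{v+1} → ℝ^u be continuous, write π : ℝ^w → ℝ^u for the projection onto the first u coordinates and σ : ℝ^w → ℝ^{v+1} for the projection onto the last v + 1 coordinates, and define f : ℝ^w → ℝ^{w × (v+1)} by: for 1 ≤ i ≤ u, f(z)_{i,j} = 0 for j ≤ v and f(z)_{i, v+1} = h(π(z), σ(z))_i; and for 1 ≤ j ≤ v + 1, f(z)_{u+j, j} = 1 with all remaining entries 0. Let X : ℝ → ℝ^{v+1} be continuously differentiable on [τ, T] with last coordinate X_{v+1}(t) = t for all t ∈ [τ, T]. Suppose z : ℝ → ℝ^w is differentiable on [τ, T] with σ(z(τ)) = X(τ) and z'(t) = f(z(t)) X'(t) (matrix–vector product) for all t ∈ [τ, T]. Then σ(z(t)) = X(t) for all t ∈ [τ, T], and y = π ∘ z satisfies y'(t) = h(y(t), X(t)) for all t ∈ [τ, T] with y(τ) = π(z(τ)). -/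

import Mathlib

open Set

/-- Neural CDEs subsume alternative ODE models (inclusion direction): with the vector
field `f` built from `h` by placing `h(π z, σ z)` in the last column of the first
`u = w - v - 1` rows and an identity block in the last `v + 1` rows, any solution of
the CDE `z' = f(z) X'` with `σ(z τ) = X τ` records the control in its last `v + 1`
coordinates, `σ(z t) = X t`, and its first `u` coordinates `y = π ∘ z` solve the ODE
`y' = h(y, X)`. -/
theorem stmt_11 (v w u : ℕ) (hw : u + (v + 1) = w) (hu : 0 < u)
    (h : (Fin u → ℝ) → (Fin (v + 1) → ℝ) → (Fin u → ℝ))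
    (hcont : Continuous fun p : (Fin u → ℝ) × (Fin (v + 1) → ℝ) => h p.1 p.2)
    (f : (Fin w → ℝ) → Matrix (Fin w) (Fin (v + 1)) ℝ)
    (hf : ∀ (z : Fin w → ℝ) (i : Fin w) (j : Fin (v + 1)),
      f z i j =
        if hi : (i : ℕ) < u then
          (if (j : ℕ) = v then
            h (fun a : Fin u => z ⟨a.1, lt_of_lt_of_le a.2 (by omega)⟩)
              (fun b : Fin (v + 1) => z ⟨u + b.1, by omega⟩) ⟨i.1, hi⟩
          else 0)
        else (if (i : ℕ) = u + (j : ℕ) then 1 else 0))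
    (τ T : ℝ) (hτT : τ < T)
    (X X' : ℝ → Fin (v + 1) → ℝ)
    (hX : ∀ t ∈ Set.Icc τ T, HasDerivAt X (X' t) t)
    (hX' : ContinuousOn X' (Set.Icc τ T))
    (hlast : ∀ t ∈ Set.Icc τ T, X t (Fin.last v) = t)
    (z : ℝ → Fin w → ℝ)
    (hz0 : ∀ b : Fin (v + 1), z τ ⟨u + b.1, by omega⟩ = X τ b)
    (hz : ∀ t ∈ Set.Icc τ T, HasDerivAt z ((f (z t)).mulVec (X' t)) t) :
    (∀ t ∈ Set.Icc τ T, ∀ b : Fin (v + 1), z t ⟨u + b.1, by omega⟩ = X t b) ∧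
    (∀ t ∈ Set.Icc τ T,
      HasDerivAt (fun s => (fun a : Fin u => z s ⟨a.1, lt_of_lt_of_le a.2 (by omega)⟩))
        (h (fun a : Fin u => z t ⟨a.1, lt_of_lt_of_le a.2 (by omega)⟩) (X t)) t) := by

  have hrow : ∀ t ∈ Set.Icc τ T, ∀ b : Fin (v + 1),
      ((f (z t)).mulVec (X' t)) ⟨u + b.1, by omega⟩ = X' t b := by
    intro t ht b
    have hterm : ∀ j : Fin (v + 1),
        f (z t) ⟨u + b.1, by omega⟩ j * X' t j = if j = b then X' t b else 0 := by
      intro j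
      rw [hf]
      have hnot : ¬ ((u + b.1 : ℕ) < u) := by omega
      rw [dif_neg hnot]
      by_cases hjb : j = b
      · subst hjb
        simp
      · have hne : ¬ ((u + b.1 : ℕ) = u + (j : ℕ)) := by
          intro hc
          exact hjb (Fin.ext (by omega)).symm
        simp [hne, hjb]
        exact fun hc => absurd (Fin.ext hc).symm hjb
    calc ((f (z t)).mulVec (X' t)) ⟨u + b.1, by omega⟩
        = ∑ j : Fin (v + 1), f (z t) ⟨u + b.1, by omega⟩ j * X' t j := rfl
      _ = ∑ j : Fin (v + 1), if j = b then X' t b else 0 :=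
          Finset.sum_congr rfl fun j _ => hterm j
      _ = X' t b := by simp
  have keyσ : ∀ t ∈ Set.Icc τ T, ∀ b : Fin (v + 1), z t ⟨u + b.1, by omega⟩ = X t b := by
    intro t ht b
    have hd1 : ∀ s ∈ Set.Ico τ T,
        HasDerivWithinAt (fun s => z s (⟨u + b.1, by omega⟩ : Fin w)) (X' s b) (Set.Ici s) s := by
      intro s hs
      have hs' : s ∈ Set.Icc τ T := ⟨hs.1, hs.2.le⟩
      have := (hasDerivAt_pi.mp (hz s hs')) ⟨u + b.1, by omega⟩
      rw [hrow s hs' b] at this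
      exact this.hasDerivWithinAt
    have hd2 : ∀ s ∈ Set.Ico τ T,
        HasDerivWithinAt (fun s => X s b) (X' s b) (Set.Ici s) s := by
      intro s hs
      exact ((hasDerivAt_pi.mp (hX s ⟨hs.1, hs.2.le⟩)) b).hasDerivWithinAt
    have hc1 : ContinuousOn (fun s => z s (⟨u + b.1, by omega⟩ : Fin w)) (Set.Icc τ T) :=
      fun s hs => ((hasDerivAt_pi.mp (hz s hs)) ⟨u + b.1, by omega⟩).continuousAt.continuousWithinAt
    have hc2 : ContinuousOn (fun s => X s b) (Set.Icc τ T) :=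
      fun s hs => ((hasDerivAt_pi.mp (hX s hs)) b).continuousAt.continuousWithinAt
    exact eq_of_has_deriv_right_eq hd1 hd2 hc1 hc2 (hz0 b) t ht
  refine ⟨keyσ, ?_⟩
  have hone : ∀ t ∈ Set.Icc τ T, X' t (Fin.last v) = 1 := by
    intro t ht
    have hud := uniqueDiffOn_Icc hτT t ht
    have h1 : HasDerivWithinAt (fun s => X s (Fin.last v)) (X' t (Fin.last v)) (Set.Icc τ T) t :=
      ((hasDerivAt_pi.mp (hX t ht)) (Fin.last v)).hasDerivWithinAt
    have h2 : HasDerivWithinAt (fun s => X s (Fin.last v)) 1 (Set.Icc τ T) t :=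
      (hasDerivWithinAt_id t (Set.Icc τ T)).congr hlast (hlast t ht)
    have e1 := h1.derivWithin hud
    have e2 := h2.derivWithin hud
    rw [e1] at e2
    exact e2
  intro t ht
  have hrowa : ∀ a : Fin u,
      ((f (z t)).mulVec (X' t)) ⟨a.1, lt_of_lt_of_le a.2 (by omega)⟩ =
        h (fun a : Fin u => z t ⟨a.1, lt_of_lt_of_le a.2 (by omega)⟩) (X t) a := by
    intro a
    have hterm : ∀ j : Fin (v + 1),
        f (z t) ⟨a.1, lt_of_lt_of_le a.2 (by omega)⟩ j * X' t j =
          if j = Fin.last v then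
            h (fun a : Fin u => z t ⟨a.1, lt_of_lt_of_le a.2 (by omega)⟩) (X t) a
          else 0 := by
      intro j
      rw [hf]
      have hai : (a.1 : ℕ) < u := a.2
      rw [dif_pos hai]
      have hσ : (fun b : Fin (v + 1) => z t ⟨u + b.1, by omega⟩) = X t :=
        funext fun b => keyσ t ht b
      by_cases hj : (j : ℕ) = v
      · have hjl : j = Fin.last v := Fin.ext hj
        rw [if_pos hj, if_pos hjl, hjl, hone t ht, mul_one, hσ]
      · have hjl : j ≠ Fin.last v := fun hc => hj (by rw [hc]; rfl)
        rw [if_neg hj, if_neg hjl, zero_mul]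
    calc ((f (z t)).mulVec (X' t)) ⟨a.1, lt_of_lt_of_le a.2 (by omega)⟩
        = ∑ j : Fin (v + 1), f (z t) ⟨a.1, lt_of_lt_of_le a.2 (by omega)⟩ j * X' t j := rfl
      _ = ∑ j : Fin (v + 1), if j = Fin.last v then
            h (fun a : Fin u => z t ⟨a.1, lt_of_lt_of_le a.2 (by omega)⟩) (X t) a else 0 :=
          Finset.sum_congr rfl fun j _ => hterm j
      _ = _ := by simp
  refine hasDerivAt_pi.mpr fun a => ?_
  have := (hasDerivAt_pi.mp (hz t ht)) ⟨a.1, lt_of_lt_of_le a.2 (by omega)⟩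
  rwa [hrowa a] at this
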